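/- Let S be a finite nonempty set, p : S → S → ℝ a stochastic matrix with all entries strictly positive, g : S → ℝ, and ζ ∈ ℝ. Suppose ρ > 0 and a strictly positive V : S → ℝ satisfy the multiplicative Poisson equation, and suppose u : S → ℝ is strictly positive with Σ_i u(i)·exp(ζ·g(i))·p(i,j) = ρ·u(j) for all j (a positive left eigenvector of Q_ζ). Define π*(i) := u(i)·V(i) / Σ_j u(j)·V(j), and let p*(i,j) := exp(ζ·g(i))·p(i,j)·V(j)/(ρ·V(i)) be the tilted kernel. Then π* is a probability distribution on S and is stationary for p*: π*(i) ≥ 0 for all i, Σ_i π*(i) = 1, and Σ_i π*(i)·p*(i,j) = π*(j) for every j. -/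

import Mathlib

/-- If `u` is a positive left eigenvector of `Q_ζ i j = exp (ζ * g i) * p i j`
with eigenvalue `ρ` and `(ρ, V)` solves the multiplicative Poisson equation,
then `π* i = u i * V i / ∑ j, u j * V j` is a probability distribution on `S`
which is stationary for the tilted kernel
`p* i j = exp (ζ * g i) * p i j * V j / (ρ * V i)`. -/
theorem tilted_stationary_distribution
    {S : Type*} [Fintype S] [Nonempty S]
    (p : S → S → ℝ)
    (hp_pos : ∀ i j, 0 < p i j)
    (hp_row : ∀ i, ∑ j, p i j = 1)
    (g : S → ℝ) (ζ : ℝ)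
    (ρ : ℝ) (hρ : 0 < ρ)
    (V : S → ℝ) (hV : ∀ i, 0 < V i)
    (heq : ∀ i, V i = (Real.exp (ζ * g i) / ρ) * ∑ j, p i j * V j)
    (u : S → ℝ) (hu : ∀ i, 0 < u i)
    (hleft : ∀ j, ∑ i, u i * (Real.exp (ζ * g i) * p i j) = ρ * u j) :
    (∀ i, 0 ≤ u i * V i / ∑ j, u j * V j) ∧
      (∑ i, u i * V i / ∑ j, u j * V j) = 1 ∧
      (∀ j, ∑ i, (u i * V i / ∑ k, u k * V k) *
          (Real.exp (ζ * g i) * p i j * V j / (ρ * V i))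
        = u j * V j / ∑ k, u k * V k) := by
  have hZ : 0 < ∑ j, u j * V j :=
    Finset.sum_pos (fun j _ => mul_pos (hu j) (hV j)) Finset.univ_nonempty
  set Z := ∑ j, u j * V j with hZdef
  refine ⟨fun i => div_nonneg (mul_pos (hu i) (hV i)).le hZ.le, ?_, ?_⟩
  · rw [← Finset.sum_div, div_self hZ.ne']
  · intro j
    have key : ∀ i, (u i * V i / Z) * (Real.exp (ζ * g i) * p i j * V j / (ρ * V i))
        = (u i * (Real.exp (ζ * g i) * p i j)) * (V j / (Z * ρ)) := by
      intro i
      field_simp [hZ.ne', hρ.ne', (hV i).ne']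
    calc ∑ i, (u i * V i / Z) * (Real.exp (ζ * g i) * p i j * V j / (ρ * V i))
        = ∑ i, (u i * (Real.exp (ζ * g i) * p i j)) * (V j / (Z * ρ)) := by
          exact Finset.sum_congr rfl fun i _ => key i
      _ = (∑ i, u i * (Real.exp (ζ * g i) * p i j)) * (V j / (Z * ρ)) := by
          rw [← Finset.sum_mul]
      _ = (ρ * u j) * (V j / (Z * ρ)) := by rw [hleft j]
      _ = u j * V j / Z := by field_simp
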